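/- For likelihood ratios 0 < λ₁ < λ₂ < λ₃ < ∞ with λ₂ the merged LR of (λ₁,π₁) and (λ₃,π₃) (i.e., λ₂ = (λ₁π₁(λ₃+1)+λ₃π₃(λ₁+1))/(π₁(λ₃+1)+π₃(λ₁+1))), the limiting merge losses satisfy the exact split Δ[λ₁,π₁;λ₂,∞] + Δ[λ₃,π₃;λ₂,∞] = Δ[λ₁,π₁;λ₃,π₃], where Δ[λ₁,π₁;λ₂,∞] = π₁(−(λ₁/(λ₁+1))log₂((1+1/λ₁)/(1+1/λ₂)) − (1/(λ₁+1))log₂((λ₁+1)/(λ₂+1))). In particular both limiting losses are at most Δ[λ₁,π₁;λ₃,π₃]. -/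
import Mathlib


/-- Capacity of a symbol pair with likelihood ratio `lam` and probability sum `pi`. -/
noncomputable def CLP (lam pi : ℝ) : ℝ :=
  pi * (1 - lam / (lam + 1) * Real.logb 2 (1 + 1 / lam)
          - 1 / (lam + 1) * Real.logb 2 (1 + lam))

/-- LR of the merge of `[lam₁,pi₁]` and `[lam₃,pi₃]`. -/
noncomputable def lamBar (lam₁ pi₁ lam₃ pi₃ : ℝ) : ℝ :=
  (lam₁ * pi₁ * (lam₃ + 1) + lam₃ * pi₃ * (lam₁ + 1)) /
    (pi₁ * (lam₃ + 1) + pi₃ * (lam₁ + 1))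

/-- Capacity loss of the merge of `[lam₁,pi₁]` and `[lam₃,pi₃]`. -/
noncomputable def deltaLP (lam₁ pi₁ lam₃ pi₃ : ℝ) : ℝ :=
  CLP lam₁ pi₁ + CLP lam₃ pi₃ - CLP (lamBar lam₁ pi₁ lam₃ pi₃) (pi₁ + pi₃)

/-- Limiting merge loss `Δ[lam,pi; mu,∞]` for `0 < lam < ∞`. -/
noncomputable def deltaInf (lam pi mu : ℝ) : ℝ :=
  pi * (-(lam / (lam + 1)) * Real.logb 2 ((1 + 1 / lam) / (1 + 1 / mu))
        - 1 / (lam + 1) * Real.logb 2 ((lam + 1) / (mu + 1)))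

lemma deltaInf_nonneg (lam pi mu : ℝ) (hl : 0 < lam) (hm : 0 < mu) (hp : 0 ≤ pi) :
    0 ≤ deltaInf lam pi mu := by
  have hl1 : 0 < lam + 1 := by linarith
  have hm1 : 0 < mu + 1 := by linarith
  have hA : 0 < (1 + 1 / lam) / (1 + 1 / mu) := by positivity
  have hB : 0 < (lam + 1) / (mu + 1) := by positivity
  have hlog2 : 0 < Real.log 2 := Real.log_pos (by norm_num)
  have key : lam / (lam + 1) * Real.log ((1 + 1 / lam) / (1 + 1 / mu))
      + 1 / (lam + 1) * Real.log ((lam + 1) / (mu + 1)) ≤ 0 := by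
    have h1 := Real.log_le_sub_one_of_pos hA
    have h2 := Real.log_le_sub_one_of_pos hB
    have c1 : 0 ≤ lam / (lam + 1) := by positivity
    have c2 : 0 ≤ 1 / (lam + 1) := by positivity
    have e : lam / (lam + 1) * ((1 + 1 / lam) / (1 + 1 / mu) - 1)
        + 1 / (lam + 1) * ((lam + 1) / (mu + 1) - 1) = 0 := by
      field_simp
      ring
    nlinarith [mul_le_mul_of_nonneg_left h1 c1, mul_le_mul_of_nonneg_left h2 c2]
  have keyb : lam / (lam + 1) * Real.logb 2 ((1 + 1 / lam) / (1 + 1 / mu))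
      + 1 / (lam + 1) * Real.logb 2 ((lam + 1) / (mu + 1)) ≤ 0 := by
    unfold Real.logb
    calc lam / (lam + 1) * (Real.log ((1 + 1 / lam) / (1 + 1 / mu)) / Real.log 2)
        + 1 / (lam + 1) * (Real.log ((lam + 1) / (mu + 1)) / Real.log 2)
        = (lam / (lam + 1) * Real.log ((1 + 1 / lam) / (1 + 1 / mu))
          + 1 / (lam + 1) * Real.log ((lam + 1) / (mu + 1))) / Real.log 2 := by ring
      _ ≤ 0 := div_nonpos_of_nonpos_of_nonneg key hlog2.le
  unfold deltaInf
  have h : 0 ≤ -(lam / (lam + 1)) * Real.logb 2 ((1 + 1 / lam) / (1 + 1 / mu))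
      - 1 / (lam + 1) * Real.logb 2 ((lam + 1) / (mu + 1)) := by linarith
  positivity

/-- if `lam₂` is the merged LR of `(lam₁,pi₁)` and `(lam₃,pi₃)`,
the limiting losses split the merge loss exactly, and each is at most the
merge loss. -/
theorem deltaInf_split (lam₁ pi₁ lam₂ lam₃ pi₃ : ℝ)
    (h₀ : 0 < lam₁) (h₁₂ : lam₁ < lam₂) (h₂₃ : lam₂ < lam₃)
    (hpi₁ : 0 < pi₁) (hpi₃ : 0 < pi₃)
    (hbar : lam₂ = lamBar lam₁ pi₁ lam₃ pi₃) :
    deltaInf lam₁ pi₁ lam₂ + deltaInf lam₃ pi₃ lam₂ = deltaLP lam₁ pi₁ lam₃ pi₃ ∧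
    deltaInf lam₁ pi₁ lam₂ ≤ deltaLP lam₁ pi₁ lam₃ pi₃ ∧
    deltaInf lam₃ pi₃ lam₂ ≤ deltaLP lam₁ pi₁ lam₃ pi₃ := by
  have h₂ : 0 < lam₂ := lt_trans h₀ h₁₂
  have h₃ : 0 < lam₃ := lt_trans h₂ h₂₃
  have h11 : (0:ℝ) < lam₁ + 1 := by linarith
  have h21 : (0:ℝ) < lam₂ + 1 := by linarith
  have h31 : (0:ℝ) < lam₃ + 1 := by linarith
  have hden : 0 < pi₁ * (lam₃ + 1) + pi₃ * (lam₁ + 1) := by positivity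
  have hprod : (0:ℝ) < (lam₁ + 1) * (lam₃ + 1) := by positivity
  have hmul : lam₂ * (pi₁ * (lam₃ + 1) + pi₃ * (lam₁ + 1))
      = lam₁ * pi₁ * (lam₃ + 1) + lam₃ * pi₃ * (lam₁ + 1) := by
    rw [hbar, lamBar, div_mul_cancel₀ _ hden.ne']
  have hA : (pi₁ + pi₃) * (lam₂ / (lam₂ + 1))
      = pi₁ * (lam₁ / (lam₁ + 1)) + pi₃ * (lam₃ / (lam₃ + 1)) := by
    rw [show pi₁ * (lam₁ / (lam₁ + 1)) + pi₃ * (lam₃ / (lam₃ + 1))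
        = (pi₁ * lam₁ * (lam₃ + 1) + pi₃ * lam₃ * (lam₁ + 1)) / ((lam₁ + 1) * (lam₃ + 1)) from by
          field_simp,
      ← mul_div_assoc, div_eq_div_iff h21.ne' hprod.ne']
    linear_combination hmul
  have hB : (pi₁ + pi₃) * (1 / (lam₂ + 1))
      = pi₁ * (1 / (lam₁ + 1)) + pi₃ * (1 / (lam₃ + 1)) := by
    rw [show pi₁ * (1 / (lam₁ + 1)) + pi₃ * (1 / (lam₃ + 1))
        = (pi₁ * (lam₃ + 1) + pi₃ * (lam₁ + 1)) / ((lam₁ + 1) * (lam₃ + 1)) from by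
          field_simp,
      mul_one_div, div_eq_div_iff h21.ne' hprod.ne']
    linear_combination -hmul
  have hq1 : (0:ℝ) < 1 + 1 / lam₁ := by positivity
  have hq2 : (0:ℝ) < 1 + 1 / lam₂ := by positivity
  have hq3 : (0:ℝ) < 1 + 1 / lam₃ := by positivity
  have heq : deltaInf lam₁ pi₁ lam₂ + deltaInf lam₃ pi₃ lam₂ = deltaLP lam₁ pi₁ lam₃ pi₃ := by
    unfold deltaInf deltaLP CLP
    rw [← hbar,
      Real.logb_div hq1.ne' hq2.ne', Real.logb_div hq3.ne' hq2.ne',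
      Real.logb_div h11.ne' h21.ne', Real.logb_div h31.ne' h21.ne',
      show (1:ℝ) + lam₁ = lam₁ + 1 from by ring,
      show (1:ℝ) + lam₂ = lam₂ + 1 from by ring,
      show (1:ℝ) + lam₃ = lam₃ + 1 from by ring]
    linear_combination (-(Real.logb 2 (1 + 1 / lam₂))) * hA + (-(Real.logb 2 (lam₂ + 1))) * hB
  refine ⟨heq, ?_, ?_⟩
  · rw [← heq]
    have := deltaInf_nonneg lam₃ pi₃ lam₂ h₃ h₂ hpi₃.le
    linarith
  · rw [← heq]
    have := deltaInf_nonneg lam₁ pi₁ lam₂ h₀ h₂ hpi₁.le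
    linarith
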